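/- Let n ≥ 3 be an integer and α, β, γ, δ real numbers, and let A : (0,1) → ℝ be defined by A(ρ) := (1/(1−ρ))·( −(2n+δ)/(n(n−1)) + (δ−γ)ρ/(n(n+1)) + γρ²/((n+1)(n+2)) + α ρ^{−n} + β ρ^{−n+1} ). Then A is twice differentiable on (0,1) and for every ρ ∈ (0,1) it satisfies the second-order linear ODE ρ²·A''(ρ) + 2(n − ρ/(1−ρ))·ρ·A'(ρ) + (n(n−1) − 2nρ/(1−ρ))·A(ρ) + 2n/(1−ρ) + γρ + δ = 0. -/

import Mathlib

/-- The general solution A(ρ) of the reduced extremal equation. -/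
noncomputable def Asol (n : ℕ) (α β γ δ : ℝ) (ρ : ℝ) : ℝ :=
  (1 / (1 - ρ)) * (-(2 * (n : ℝ) + δ) / ((n : ℝ) * ((n : ℝ) - 1))
    + (δ - γ) * ρ / ((n : ℝ) * ((n : ℝ) + 1))
    + γ * ρ ^ 2 / (((n : ℝ) + 1) * ((n : ℝ) + 2))
    + α / ρ ^ n + β / ρ ^ (n - 1))

noncomputable def Gfun (n : ℕ) (α β γ δ : ℝ) (x : ℝ) : ℝ :=
  -(2 * (n : ℝ) + δ) / ((n : ℝ) * ((n : ℝ) - 1))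
    + (δ - γ) / ((n : ℝ) * ((n : ℝ) + 1)) * x
    + γ / (((n : ℝ) + 1) * ((n : ℝ) + 2)) * x ^ 2
    + α * (x ^ n)⁻¹ + β * (x ^ (n - 1))⁻¹

noncomputable def G1fun (n : ℕ) (α β γ δ : ℝ) (x : ℝ) : ℝ :=
  (δ - γ) / ((n : ℝ) * ((n : ℝ) + 1))
    + 2 * (γ / (((n : ℝ) + 1) * ((n : ℝ) + 2))) * x
    - (n : ℝ) * α * (x ^ (n + 1))⁻¹ - ((n : ℝ) - 1) * β * (x ^ n)⁻¹

noncomputable def G2fun (n : ℕ) (α β γ δ : ℝ) (x : ℝ) : ℝ :=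
  2 * (γ / (((n : ℝ) + 1) * ((n : ℝ) + 2)))
    + (n : ℝ) * ((n : ℝ) + 1) * α * (x ^ (n + 2))⁻¹
    + ((n : ℝ) - 1) * (n : ℝ) * β * (x ^ (n + 1))⁻¹

noncomputable def Ffun (n : ℕ) (α β γ δ : ℝ) (x : ℝ) : ℝ :=
  (1 - x)⁻¹ * Gfun n α β γ δ x

noncomputable def F1fun (n : ℕ) (α β γ δ : ℝ) (x : ℝ) : ℝ :=
  ((1 - x)⁻¹) ^ 2 * Gfun n α β γ δ x + (1 - x)⁻¹ * G1fun n α β γ δ x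

noncomputable def F2fun (n : ℕ) (α β γ δ : ℝ) (x : ℝ) : ℝ :=
  2 * ((1 - x)⁻¹) ^ 3 * Gfun n α β γ δ x + 2 * ((1 - x)⁻¹) ^ 2 * G1fun n α β γ δ x
    + (1 - x)⁻¹ * G2fun n α β γ δ x

lemma hasDerivAt_inv_pow' {ρ : ℝ} (hρ : ρ ≠ 0) (k : ℕ) (hk : 1 ≤ k) :
    HasDerivAt (fun x : ℝ => (x ^ k)⁻¹) (-(k : ℝ) * (ρ ^ (k + 1))⁻¹) ρ := by
  have h := (hasDerivAt_pow k ρ).inv (pow_ne_zero k hρ)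
  convert h using 1
  · rfl
  · rfl
  · rfl
  have h2 : (ρ ^ k) ^ 2 = ρ ^ (k - 1) * ρ ^ (k + 1) := by
    rw [← pow_mul, ← pow_add]; congr 1; omega
  rw [h2]
  have hk1 : ρ ^ (k - 1) ≠ 0 := pow_ne_zero _ hρ
  have hk2 : ρ ^ (k + 1) ≠ 0 := pow_ne_zero _ hρ
  field_simp

lemma hasDerivAt_G (n : ℕ) (hn : 3 ≤ n) (α β γ δ : ℝ) {ρ : ℝ} (hρ : ρ ≠ 0) :
    HasDerivAt (Gfun n α β γ δ) (G1fun n α β γ δ ρ) ρ := by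
  have hc : ((n - 1 : ℕ) : ℝ) = (n : ℝ) - 1 := by
    have : (1 : ℕ) ≤ n := by omega
    push_cast [this]; ring
  have hnn : n - 1 + 1 = n := by omega
  have h1 : HasDerivAt (fun x : ℝ => (δ - γ) / ((n : ℝ) * ((n : ℝ) + 1)) * x)
      ((δ - γ) / ((n : ℝ) * ((n : ℝ) + 1))) ρ := by
    simpa using (hasDerivAt_id ρ).const_mul ((δ - γ) / ((n : ℝ) * ((n : ℝ) + 1)))
  have h2 : HasDerivAt (fun x : ℝ => γ / (((n : ℝ) + 1) * ((n : ℝ) + 2)) * x ^ 2)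
      (γ / (((n : ℝ) + 1) * ((n : ℝ) + 2)) * (2 * ρ ^ 1)) ρ :=
    (hasDerivAt_pow 2 ρ).const_mul _
  have h3 : HasDerivAt (fun x : ℝ => α * (x ^ n)⁻¹)
      (α * (-(n : ℝ) * (ρ ^ (n + 1))⁻¹)) ρ :=
    (hasDerivAt_inv_pow' hρ n (by omega)).const_mul α
  have h4 : HasDerivAt (fun x : ℝ => β * (x ^ (n - 1))⁻¹)
      (β * (-((n - 1 : ℕ) : ℝ) * (ρ ^ (n - 1 + 1))⁻¹)) ρ :=
    (hasDerivAt_inv_pow' hρ (n - 1) (by omega)).const_mul β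
  have H := ((((hasDerivAt_const ρ
      (-(2 * (n : ℝ) + δ) / ((n : ℝ) * ((n : ℝ) - 1)))).add h1).add h2).add h3).add h4
  rw [hnn] at H
  convert H using 1
  · rfl
  · rfl
  · rfl
  unfold G1fun
  rw [hc]
  ring

lemma hasDerivAt_G1 (n : ℕ) (hn : 3 ≤ n) (α β γ δ : ℝ) {ρ : ℝ} (hρ : ρ ≠ 0) :
    HasDerivAt (G1fun n α β γ δ) (G2fun n α β γ δ ρ) ρ := by
  have h1 : HasDerivAt (fun x : ℝ => 2 * (γ / (((n : ℝ) + 1) * ((n : ℝ) + 2))) * x)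
      (2 * (γ / (((n : ℝ) + 1) * ((n : ℝ) + 2)))) ρ := by
    simpa using (hasDerivAt_id ρ).const_mul (2 * (γ / (((n : ℝ) + 1) * ((n : ℝ) + 2))))
  have h3 : HasDerivAt (fun x : ℝ => (n : ℝ) * α * (x ^ (n + 1))⁻¹)
      ((n : ℝ) * α * (-((n + 1 : ℕ) : ℝ) * (ρ ^ (n + 1 + 1))⁻¹)) ρ :=
    (hasDerivAt_inv_pow' hρ (n + 1) (by omega)).const_mul _
  have h4 : HasDerivAt (fun x : ℝ => ((n : ℝ) - 1) * β * (x ^ n)⁻¹)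
      (((n : ℝ) - 1) * β * (-(n : ℝ) * (ρ ^ (n + 1))⁻¹)) ρ :=
    (hasDerivAt_inv_pow' hρ n (by omega)).const_mul _
  have H := (((hasDerivAt_const ρ
      ((δ - γ) / ((n : ℝ) * ((n : ℝ) + 1)))).add h1).sub h3).sub h4
  convert H using 1
  · rfl
  · rfl
  · rfl
  unfold G2fun
  push_cast
  ring

set_option maxHeartbeats 4000000 in
/-- A is twice differentiable on (0,1) and satisfies the second-order linear ODE
ρ²A'' + 2(n − ρ/(1−ρ))ρA' + (n(n−1) − 2nρ/(1−ρ))A + 2n/(1−ρ) + γρ + δ = 0. -/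
theorem Asol_solves_ODE (n : ℕ) (hn : 3 ≤ n) (α β γ δ : ℝ) :
    ∀ ρ ∈ Set.Ioo (0 : ℝ) 1,
      DifferentiableAt ℝ (Asol n α β γ δ) ρ ∧
      DifferentiableAt ℝ (deriv (Asol n α β γ δ)) ρ ∧
      ρ ^ 2 * deriv (deriv (Asol n α β γ δ)) ρ
        + 2 * ((n : ℝ) - ρ / (1 - ρ)) * ρ * deriv (Asol n α β γ δ) ρ
        + ((n : ℝ) * ((n : ℝ) - 1) - 2 * (n : ℝ) * ρ / (1 - ρ)) * Asol n α β γ δ ρ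
        + 2 * (n : ℝ) / (1 - ρ) + γ * ρ + δ = 0 := by
  have hA : Asol n α β γ δ = Ffun n α β γ δ := by
    funext x
    unfold Asol Ffun Gfun
    ring
  intro ρ hρ
  obtain ⟨h0, hlt1⟩ := hρ
  have h0' : ρ ≠ 0 := ne_of_gt h0
  have h1' : (1 : ℝ) - ρ ≠ 0 := by intro h; nlinarith
  -- derivative of the factor (1-x)⁻¹
  have hinv : ∀ x : ℝ, x ∈ Set.Ioo (0 : ℝ) 1 →
      HasDerivAt (fun y : ℝ => (1 - y)⁻¹) (((1 - x)⁻¹) ^ 2) x := by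
    intro x hx
    have hx1 : (1 : ℝ) - x ≠ 0 := by have := hx.2; intro h; nlinarith
    have h := ((hasDerivAt_const x (1 : ℝ)).sub (hasDerivAt_id x)).inv hx1
    convert h using 1
    · rfl
    · rfl
    · rfl
    show (1 - x)⁻¹ ^ 2 = -(0 - 1) / (1 - x) ^ 2
    field_simp
    ring
  have hder1 : ∀ x ∈ Set.Ioo (0 : ℝ) 1,
      HasDerivAt (Asol n α β γ δ) (F1fun n α β γ δ x) x := by
    intro x hx
    rw [hA]
    have := (hinv x hx).mul (hasDerivAt_G n hn α β γ δ (ne_of_gt hx.1))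
    exact this
  have hder2 : HasDerivAt (F1fun n α β γ δ) (F2fun n α β γ δ ρ) ρ := by
    have hsq : HasDerivAt (fun y : ℝ => ((1 - y)⁻¹) ^ 2)
        (2 * ((1 - ρ)⁻¹) ^ 1 * ((1 - ρ)⁻¹) ^ 2) ρ := (hinv ρ ⟨h0, hlt1⟩).pow 2
    have hG := hasDerivAt_G n hn α β γ δ h0'
    have hG1 := hasDerivAt_G1 n hn α β γ δ h0'
    have H := (hsq.mul hG).add (((hinv ρ ⟨h0, hlt1⟩)).mul hG1)
    convert H using 1
    · rfl
    · rfl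
    · rfl
    unfold F2fun
    ring
  have hmem : Set.Ioo (0 : ℝ) 1 ∈ nhds ρ := isOpen_Ioo.mem_nhds ⟨h0, hlt1⟩
  have heq : deriv (Asol n α β γ δ) =ᶠ[nhds ρ] F1fun n α β γ δ :=
    Filter.eventuallyEq_of_mem hmem fun x hx => (hder1 x hx).deriv
  have hd1 : deriv (Asol n α β γ δ) ρ = F1fun n α β γ δ ρ := (hder1 ρ ⟨h0, hlt1⟩).deriv
  have hd2 : deriv (deriv (Asol n α β γ δ)) ρ = F2fun n α β γ δ ρ := by
    rw [heq.deriv_eq]; exact hder2.deriv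
  refine ⟨(hder1 ρ ⟨h0, hlt1⟩).differentiableAt, ?_, ?_⟩
  · exact (hder2.congr_of_eventuallyEq heq).differentiableAt
  · rw [hd1, hd2, hA]
    have hN : (3 : ℝ) ≤ (n : ℝ) := by exact_mod_cast hn
    have hN0 : (n : ℝ) ≠ 0 := by linarith
    have hN1 : (n : ℝ) - 1 ≠ 0 := by linarith
    have hN2 : (n : ℝ) + 1 ≠ 0 := by linarith
    have hN3 : (n : ℝ) + 2 ≠ 0 := by linarith
    have e1 : ρ ^ n = ρ ^ (n - 1) * ρ := by rw [← pow_succ]; congr 1; omega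
    have e2 : ρ ^ (n + 1) = ρ ^ (n - 1) * ρ ^ 2 := by rw [← pow_add]; congr 1; omega
    have e3 : ρ ^ (n + 2) = ρ ^ (n - 1) * ρ ^ 3 := by rw [← pow_add]; congr 1; omega
    have ht : ρ ^ (n - 1) ≠ 0 := pow_ne_zero _ h0'
    unfold Ffun F1fun F2fun Gfun G1fun G2fun
    rw [e3, e2, e1]
    field_simp
    ring
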